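/- Let E = F(√a₁, √a₂) be a biquadratic extension of F with Galois group G generated by σ₁, σ₂ as above, with E₁ = F(√a₁), E₂ = F(√a₂), E₃ = F(√(a₁a₂)). Then {e ∈ E^× : N_{E/E₃}(e) ∈ F^×} = {e ∈ E^× : N_{E/E₃}(e) ∈ N_{E₁/F}(E₁^×) · N_{E₂/F}(E₂^×)}, where the right-hand product denotes the set of all products of an element of N_{E₁/F}(E₁^×) with an element of N_{E₂/F}(E₂^×). -/

import Mathlib

/-- For a biquadratic extension `E = F(√a₁, √a₂)` with `E₃ = F(√(a₁a₂))`: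
`{e ∈ E^× : N_{E/E₃}(e) ∈ F^×}` equals
`{e ∈ E^× : N_{E/E₃}(e) ∈ N_{E₁/F}(E₁^×) · N_{E₂/F}(E₂^×)}`, where
`N_{Eᵢ/F}(x + y√aᵢ) = x² − aᵢ y²`. -/
theorem biquadratic_norm_in_F_eq_norm_in_product
    (F E : Type*) [Field F] [Field E] [Algebra F E]
    (hchar : (2 : F) ≠ 0)
    (a₁ a₂ : F) (ha₁ : ¬ IsSquare a₁) (ha₂ : ¬ IsSquare a₂)
    (ha₁₂ : ¬ IsSquare (a₁ * a₂))
    (s₁ s₂ : E)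
    (hs₁ : s₁ ^ 2 = algebraMap F E a₁) (hs₂ : s₂ ^ 2 = algebraMap F E a₂)
    (htop : Algebra.adjoin F ({s₁, s₂} : Set E) = ⊤)
    (σ₁ σ₂ : E ≃ₐ[F] E)
    (hσ₁₁ : σ₁ s₁ = s₁) (hσ₁₂ : σ₁ s₂ = -s₂)
    (hσ₂₁ : σ₂ s₁ = -s₁) (hσ₂₂ : σ₂ s₂ = s₂) :
    ∀ e : E, e ≠ 0 →
      ((∃ f : F, f ≠ 0 ∧ algebraMap F E f = e * σ₁ (σ₂ e)) ↔
        (∃ x₁ y₁ x₂ y₂ : F, x₁ ^ 2 - a₁ * y₁ ^ 2 ≠ 0 ∧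
          x₂ ^ 2 - a₂ * y₂ ^ 2 ≠ 0 ∧
          algebraMap F E ((x₁ ^ 2 - a₁ * y₁ ^ 2) * (x₂ ^ 2 - a₂ * y₂ ^ 2)) =
            e * σ₁ (σ₂ e))) := by
  set A := algebraMap F E with hA
  have hinj : Function.Injective A := (algebraMap F E).injective
  -- spanning
  have key : ∀ x ∈ Algebra.adjoin F ({s₁, s₂} : Set E),
      ∃ a b c d : F, x = A a + A b * s₁ + A c * s₂ + A d * (s₁ * s₂) := by
    intro x hx
    induction hx using Algebra.adjoin_induction with
    | mem x hx =>
      rcases hx with rfl | rfl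
      · exact ⟨0, 1, 0, 0, by simp⟩
      · exact ⟨0, 0, 1, 0, by simp⟩
    | algebraMap r => exact ⟨r, 0, 0, 0, by simp [hA]⟩
    | add x y _ _ hx hy =>
      obtain ⟨a, b, c, d, rfl⟩ := hx
      obtain ⟨a', b', c', d', rfl⟩ := hy
      exact ⟨a + a', b + b', c + c', d + d', by simp only [map_add]; ring⟩
    | mul x y _ _ hx hy =>
      obtain ⟨a, b, c, d, rfl⟩ := hx
      obtain ⟨a', b', c', d', rfl⟩ := hy
      refine ⟨a * a' + a₁ * (b * b') + a₂ * (c * c') + a₁ * a₂ * (d * d'),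
        a * b' + b * a' + a₂ * (c * d' + d * c'),
        a * c' + c * a' + a₁ * (b * d' + d * b'),
        a * d' + d * a' + b * c' + c * b', ?_⟩
      simp only [map_add, map_mul]
      linear_combination (A b * A b' + (A b * A d' + A d * A b') * s₂ + A d * A d' * s₂ ^ 2) * hs₁
        + (A c * A c' + (A c * A d' + A d * A c') * s₁ + A d * A d' * A a₁) * hs₂
  intro e he
  obtain ⟨a, b, c, d, rfl⟩ := key e (htop ▸ Algebra.mem_top)
  have hτ : σ₁ (σ₂ (A a + A b * s₁ + A c * s₂ + A d * (s₁ * s₂)))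
      = A a - A b * s₁ - A c * s₂ + A d * (s₁ * s₂) := by
    simp only [map_add, map_mul, AlgEquiv.commutes, hσ₁₁, hσ₁₂, hσ₂₁, hσ₂₂, map_neg, hA]
    ring
  set e := A a + A b * s₁ + A c * s₂ + A d * (s₁ * s₂) with he'
  have hN : e * σ₁ (σ₂ e)
      = A (a ^ 2 - a₁ * b ^ 2 - a₂ * c ^ 2 + a₁ * a₂ * d ^ 2)
        + A (2 * (a * d - b * c)) * (s₁ * s₂) := by
    rw [hτ, he']
    simp only [map_add, map_mul, map_sub, map_pow, map_ofNat, map_one]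
    linear_combination (A d * A d * s₂ ^ 2 - A b * A b) * hs₁
      + (A d * A d * A a₁ - A c * A c) * hs₂
  constructor
  · rintro ⟨f, hf0, hf⟩
    -- first: a*d = b*c
    have had : a * d = b * c := by
      by_contra hne
      have h2 : (2 * (a * d - b * c)) ≠ 0 :=
        mul_ne_zero hchar (sub_ne_zero.mpr hne)
      have hss : s₁ * s₂ = A ((f - (a ^ 2 - a₁ * b ^ 2 - a₂ * c ^ 2 + a₁ * a₂ * d ^ 2))
          / (2 * (a * d - b * c))) := by
        rw [map_div₀, map_sub, eq_div_iff (by exact fun h => h2 (hinj (by simpa using h)))]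
        rw [hf, hN]; ring
      apply ha₁₂
      refine ⟨(f - (a ^ 2 - a₁ * b ^ 2 - a₂ * c ^ 2 + a₁ * a₂ * d ^ 2))
          / (2 * (a * d - b * c)), hinj ?_⟩
      have : (s₁ * s₂) ^ 2 = A (a₁ * a₂) := by
        rw [mul_pow, hs₁, hs₂, map_mul]
      rw [← this, hss, map_mul]; ring
    -- the norm equals g
    have hg : f = a ^ 2 - a₁ * b ^ 2 - a₂ * c ^ 2 + a₁ * a₂ * d ^ 2 := by
      apply hinj
      rw [hf, hN, had, sub_self, mul_zero, map_zero, zero_mul, add_zero]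
    -- rank-one factorization
    have hfact : ∃ x₁ y₁ x₂ y₂ : F,
        f = (x₁ ^ 2 - a₁ * y₁ ^ 2) * (x₂ ^ 2 - a₂ * y₂ ^ 2) := by
      by_cases ha : a ≠ 0
      · refine ⟨a, b, 1, c / a, ?_⟩
        rw [hg]
        field_simp
        linear_combination a₁ * a₂ * (a * d + b * c) * had
      · push_neg at ha
        subst ha
        by_cases hb : b ≠ 0
        · have hc : c = 0 := by
            have hbc : b * c = 0 := by rw [← had, zero_mul]
            rcases mul_eq_zero.mp hbc with h | h
            · exact absurd h hb
            · exact h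
          refine ⟨0, b, 1, d / b, ?_⟩
          rw [hg, hc]
          field_simp
          ring
        · push_neg at hb
          subst hb
          exact ⟨c, d, 0, 1, by rw [hg]; ring⟩
    obtain ⟨x₁, y₁, x₂, y₂, hfeq⟩ := hfact
    have hne : (x₁ ^ 2 - a₁ * y₁ ^ 2) ≠ 0 ∧ (x₂ ^ 2 - a₂ * y₂ ^ 2) ≠ 0 :=
      mul_ne_zero_iff.mp (hfeq ▸ hf0)
    exact ⟨x₁, y₁, x₂, y₂, hne.1, hne.2, by rw [← hfeq, hf]⟩
  · rintro ⟨x₁, y₁, x₂, y₂, h1, h2, h⟩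
    exact ⟨(x₁ ^ 2 - a₁ * y₁ ^ 2) * (x₂ ^ 2 - a₂ * y₂ ^ 2), mul_ne_zero h1 h2, h⟩
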